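/- Let R be a subring of ℂ and F a subfield of ℂ. The set D_{R,F} of D-finite numbers with respect to R and F—complex numbers that are limits of convergent sequences in R^ℕ which are P-recursive over F—is a subring of ℂ. Moreover, if R is an F-algebra then so is D_{R,F}. -/

import Mathlib

set_option synthInstance.maxHeartbeats 400000
set_option maxHeartbeats 1000000

open Filter Polynomial

noncomputable section

variable (F : Subfield ℂ)


/-- A sequence of complex numbers is P-recursive over a subfield `F` of `ℂ`
if it satisfies a nontrivial linear recurrence whose polynomial coefficients
have entries in `F`. -/
def IsPRecursiveOver (F : Subfield ℂ) (a : ℕ → ℂ) : Prop :=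
  ∃ ρ : ℕ, ∃ p : ℕ → Polynomial F,
    (∃ j ≤ ρ, p j ≠ 0) ∧
    ∀ n : ℕ, (∑ j ∈ Finset.range (ρ + 1),
      ((p j).map F.subtype).eval (n : ℂ) * a (n + j)) = 0

/-- The set of D-finite numbers with respect to `R` and `F`: limits of
convergent sequences with terms in `R` that are P-recursive over `F`. -/
def DFiniteNumbers (R : Subring ℂ) (F : Subfield ℂ) : Set ℂ :=
  {ξ : ℂ | ∃ a : ℕ → ℂ, (∀ n, a n ∈ R) ∧ IsPRecursiveOver F a ∧
    Filter.Tendsto a Filter.atTop (nhds ξ)}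


/-- Type synonym for the germ ring, carrying a `RatFunc F`-algebra structure. -/
def GF (_F : Subfield ℂ) : Type := Filter.Germ (Filter.atTop : Filter ℕ) ℂ

instance : CommRing (GF F) := inferInstanceAs (CommRing (Filter.Germ _ ℂ))

/-- germ of a sequence -/
def germ (a : ℕ → ℂ) : GF F := (↑a : Filter.Germ (Filter.atTop : Filter ℕ) ℂ)

/-- evaluation of polynomials over F as germs -/
def psi : Polynomial F →+* GF F :=
  (Filter.Germ.coeRingHom _).comp
    (Pi.ringHom fun n : ℕ => (Polynomial.evalRingHom (n : ℂ)).comp (mapRingHom F.subtype))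

lemma psi_apply (p : Polynomial F) :
    psi F p = germ F (fun n : ℕ => (p.map F.subtype).eval (n : ℂ)) := rfl

lemma map_subtype_ne_zero {p : Polynomial F} (hp : p ≠ 0) : p.map F.subtype ≠ 0 :=
  (Polynomial.map_ne_zero_iff (Subtype.coe_injective : Function.Injective F.subtype)).mpr hp

lemma eventually_eval_ne_zero {p : Polynomial F} (hp : p ≠ 0) :
    ∀ᶠ n : ℕ in atTop, (p.map F.subtype).eval (n : ℂ) ≠ 0 := by
  have h1 : {x : ℂ | (p.map F.subtype).IsRoot x}.Finite :=
    Polynomial.finite_setOf_isRoot (map_subtype_ne_zero F hp)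
  have h2 : {n : ℕ | (p.map F.subtype).eval (n : ℂ) = 0}.Finite := by
    apply Set.Finite.preimage (f := fun n : ℕ => (n : ℂ)) _ h1
    exact Set.injOn_of_injective Nat.cast_injective
  rw [← Nat.cofinite_eq_atTop]
  exact Set.Finite.eventually_cofinite_notMem h2

lemma isUnit_psi {p : Polynomial F} (hp : p ≠ 0) : IsUnit (psi F p) := by
  classical
  set f : ℕ → ℂ := fun n => (p.map F.subtype).eval (n : ℂ)
  refine IsUnit.of_mul_eq_one (germ F (fun n => (f n)⁻¹)) ?_
  have : (fun n => f n * (f n)⁻¹) =ᶠ[atTop] (fun _ => (1 : ℂ)) := by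
    filter_upwards [eventually_eval_ne_zero F hp] with n hn
    exact mul_inv_cancel₀ hn
  show ((f : Filter.Germ (atTop : Filter ℕ) ℂ) * ↑(fun n => (f n)⁻¹) = 1)
  rw [← Filter.Germ.coe_mul]
  exact Filter.Germ.coe_eq.mpr this

def phi : RatFunc F →+* GF F :=
  IsLocalization.lift (M := nonZeroDivisors (Polynomial F)) (S := RatFunc F)
    (g := psi F) (fun y => isUnit_psi F (nonZeroDivisors.ne_zero y.2))

instance : Algebra (RatFunc F) (GF F) := (phi F).toAlgebra

lemma algebraMap_eq : (algebraMap (RatFunc F) (GF F) : RatFunc F →+* GF F) = phi F := rfl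

lemma algebraMap_poly (p : Polynomial F) :
    algebraMap (RatFunc F) (GF F) (algebraMap (Polynomial F) (RatFunc F) p) = psi F p := by
  rw [algebraMap_eq]; exact IsLocalization.lift_eq _ p

set_option maxHeartbeats 1000000 in
lemma smul_def' (c : RatFunc F) (x : GF F) :
    c • x = algebraMap (RatFunc F) (GF F) c * x := Algebra.smul_def c x

/-- the shift endomorphism of the germ ring -/
def shift : GF F →+* GF F where
  toFun x := Filter.Germ.compTendsto
      (x : Filter.Germ (atTop : Filter ℕ) ℂ) (fun n : ℕ => n + 1)
      (tendsto_add_atTop_nat 1)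
  map_one' := rfl
  map_mul' x y :=
    Filter.Germ.inductionOn x fun _ => Filter.Germ.inductionOn y fun _ => rfl
  map_zero' := rfl
  map_add' x y :=
    Filter.Germ.inductionOn x fun _ => Filter.Germ.inductionOn y fun _ => rfl

lemma shift_germ (a : ℕ → ℂ) : shift F (germ F a) = germ F (fun n => a (n + 1)) := rfl

lemma shift_pow_germ (a : ℕ → ℂ) (k : ℕ) :
    (shift F)^[k] (germ F a) = germ F (fun n => a (n + k)) := by
  induction k with
  | zero => simp [germ]; rfl
  | succ k ih =>
    rw [Function.iterate_succ_apply', ih, shift_germ]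
    congr 1
    funext n
    ring_nf


/-- substitution X ↦ X+1 on polynomials -/
def tau0 : Polynomial F →+* Polynomial F :=
  (Polynomial.aeval (Polynomial.X + 1 : Polynomial F)).toRingHom

lemma tau0_apply (p : Polynomial F) : tau0 F p = p.comp (Polynomial.X + 1) := by
  simp [tau0, Polynomial.aeval_def, Polynomial.comp, Polynomial.eval₂_def, Polynomial.algebraMap_eq]

lemma tau0_ne_zero {p : Polynomial F} (hp : p ≠ 0) : tau0 F p ≠ 0 := by
  intro h
  apply hp
  have h2 : (tau0 F p).comp (Polynomial.X - 1) = 0 := by rw [h]; simp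
  rw [tau0_apply, Polynomial.comp_assoc] at h2
  simpa using h2

/-- substitution X ↦ X+1 on rational functions -/
def tau : RatFunc F →+* RatFunc F :=
  IsLocalization.lift (M := nonZeroDivisors (Polynomial F)) (S := RatFunc F)
    (g := (algebraMap (Polynomial F) (RatFunc F)).comp (tau0 F))
    (fun y => by
      have : tau0 F (y : Polynomial F) ≠ 0 := tau0_ne_zero F (nonZeroDivisors.ne_zero y.2)
      have h3 : algebraMap (Polynomial F) (RatFunc F) (tau0 F (y : Polynomial F)) ≠ 0 :=
        RatFunc.algebraMap_ne_zero this
      simpa using isUnit_iff_ne_zero.mpr h3)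

lemma tau_algebraMap (p : Polynomial F) :
    tau F (algebraMap (Polynomial F) (RatFunc F) p) =
      algebraMap (Polynomial F) (RatFunc F) (tau0 F p) :=
  IsLocalization.lift_eq _ p

lemma shift_psi (p : Polynomial F) : shift F (psi F p) = psi F (tau0 F p) := by
  rw [psi_apply, psi_apply, shift_germ]
  congr 1
  funext n
  rw [tau0_apply, Polynomial.map_comp, Polynomial.eval_comp]
  push_cast
  simp

lemma shift_algebraMap (c : RatFunc F) :
    shift F (algebraMap (RatFunc F) (GF F) c) =
      algebraMap (RatFunc F) (GF F) (tau F c) := by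
  have key : (shift F).comp (algebraMap (RatFunc F) (GF F)) =
      (algebraMap (RatFunc F) (GF F)).comp (tau F) := by
    apply IsLocalization.ringHom_ext (nonZeroDivisors (Polynomial F))
    refine RingHom.ext fun p => ?_
    simp only [RingHom.comp_apply, algebraMap_poly, tau_algebraMap]
    exact shift_psi F p
  exact congrFun (congrArg (fun f => f.toFun) key) c

lemma shift_smul (c : RatFunc F) (v : GF F) :
    shift F (c • v) = tau F c • shift F v := by
  rw [smul_def', smul_def', map_mul, shift_algebraMap]

lemma psi_mul_eq_smul (q : Polynomial F) (v : GF F) :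
    psi F q * v = (algebraMap (Polynomial F) (RatFunc F) q) • v := by
  rw [smul_def', algebraMap_poly]


/-- A germ is "holonomic" if it lies in a finitely generated shift-stable
`RatFunc F`-submodule of the germ ring. -/
def Holo (x : GF F) : Prop :=
  ∃ V : Submodule (RatFunc F) (GF F), V.FG ∧ x ∈ V ∧ ∀ v ∈ V, shift F v ∈ V

lemma holo_add {x y : GF F} (hx : Holo F x) (hy : Holo F y) : Holo F (x + y) := by
  obtain ⟨V, hVfg, hxV, hVs⟩ := hx
  obtain ⟨W, hWfg, hyW, hWs⟩ := hy
  refine ⟨V ⊔ W, hVfg.sup hWfg, ?_, ?_⟩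
  · exact Submodule.add_mem _ (Submodule.mem_sup_left hxV) (Submodule.mem_sup_right hyW)
  · intro v hv
    obtain ⟨a, ha, b, hb, rfl⟩ := Submodule.mem_sup.mp hv
    rw [map_add]
    exact Submodule.add_mem _ (Submodule.mem_sup_left (hVs a ha))
      (Submodule.mem_sup_right (hWs b hb))

lemma holo_mul {x y : GF F} (hx : Holo F x) (hy : Holo F y) : Holo F (x * y) := by
  obtain ⟨V, hVfg, hxV, hVs⟩ := hx
  obtain ⟨W, hWfg, hyW, hWs⟩ := hy
  refine ⟨V * W, hVfg.mul hWfg, Submodule.mul_mem_mul hxV hyW, ?_⟩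
  intro v hv
  refine Submodule.mul_induction_on hv (fun m hm n hn => ?_) (fun a b ha hb => ?_)
  · rw [map_mul]
    exact Submodule.mul_mem_mul (hVs m hm) (hWs n hn)
  · rw [map_add]; exact Submodule.add_mem _ ha hb

/-- the preimage of a submodule under the (semilinear) shift -/
def shiftPre (V : Submodule (RatFunc F) (GF F)) : Submodule (RatFunc F) (GF F) where
  carrier := shift F ⁻¹' V
  add_mem' := fun {a b} ha hb => by
    simp only [Set.mem_preimage, map_add] at *
    exact Submodule.add_mem _ ha hb
  zero_mem' := by simp only [Set.mem_preimage, map_zero]; exact Submodule.zero_mem _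
  smul_mem' := fun c v hv => by
    simp only [Set.mem_preimage] at *
    rw [shift_smul]
    exact Submodule.smul_mem _ _ hv


lemma germ_sum {ι : Type*} (s : Finset ι) (f : ι → ℕ → ℂ) :
    germ F (fun n => ∑ j ∈ s, f j n) = ∑ j ∈ s, germ F (f j) := by
  classical
  induction s using Finset.induction with
  | empty => simp [germ]; rfl
  | insert j s hj ih =>
    rw [Finset.sum_insert hj, ← ih]
    simp only [Finset.sum_insert hj]
    rfl

lemma germ_eq_zero_iff (f : ℕ → ℂ) :
    germ F f = 0 ↔ ∀ᶠ n in atTop, f n = 0 := by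
  constructor
  · intro h
    have : (f : Filter.Germ (atTop : Filter ℕ) ℂ) = ((fun _ => (0:ℂ)) : ℕ → ℂ) := h
    exact Filter.Germ.coe_eq.mp this
  · intro h
    exact Filter.Germ.coe_eq.mpr h

lemma term_eq (a : ℕ → ℂ) (p : Polynomial F) (j : ℕ) :
    psi F p * (shift F)^[j] (germ F a) =
      germ F (fun n => (p.map F.subtype).eval (n : ℂ) * a (n + j)) := by
  rw [shift_pow_germ, psi_apply]; rfl

lemma germ_recurrence {a : ℕ → ℂ} {ρ : ℕ} {p : ℕ → Polynomial F}
    (h : ∀ n : ℕ, (∑ j ∈ Finset.range (ρ + 1),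
      ((p j).map F.subtype).eval (n : ℂ) * a (n + j)) = 0) :
    ∑ j ∈ Finset.range (ρ + 1), psi F (p j) * (shift F)^[j] (germ F a) = 0 := by
  have : ∑ j ∈ Finset.range (ρ + 1), psi F (p j) * (shift F)^[j] (germ F a) =
      germ F (fun n => ∑ j ∈ Finset.range (ρ + 1),
        ((p j).map F.subtype).eval (n : ℂ) * a (n + j)) := by
    rw [germ_sum]
    exact Finset.sum_congr rfl fun j _ => term_eq F a (p j) j
  rw [this, germ_eq_zero_iff]
  filter_upwards with n using h n

lemma holo_of_pRecursive {a : ℕ → ℂ} (h : IsPRecursiveOver F a) : Holo F (germ F a) := by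
  classical
  obtain ⟨ρ, p, ⟨j₀, hj₀ρ, hj₀⟩, hrec⟩ := h
  set x := germ F a with hx
  have G0 : ∑ j ∈ Finset.range (ρ + 1), psi F (p j) * (shift F)^[j] x = 0 :=
    germ_recurrence F hrec
  set S : Finset ℕ := (Finset.range (ρ + 1)).filter (fun j => p j ≠ 0) with hS
  have hj₀S : j₀ ∈ S := by
    simp only [hS, Finset.mem_filter, Finset.mem_range]
    exact ⟨Nat.lt_succ_of_le hj₀ρ, hj₀⟩
  set m : ℕ := S.max' ⟨j₀, hj₀S⟩ with hmdef
  have hmS : m ∈ S := S.max'_mem _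
  have hpm : p m ≠ 0 := (Finset.mem_filter.mp hmS).2
  have hmρ : m < ρ + 1 := Finset.mem_range.mp (Finset.mem_filter.mp hmS).1
  have hgt : ∀ j, j < ρ + 1 → m < j → p j = 0 := by
    intro j hj hmj
    by_contra hpj
    exact absurd (S.le_max' j (Finset.mem_filter.mpr ⟨Finset.mem_range.mpr hj, hpj⟩))
      (not_le.mpr hmj)
  have G1 : ∑ j ∈ Finset.range (m + 1), psi F (p j) * (shift F)^[j] x = 0 := by
    rw [← G0]
    apply Finset.sum_subset
    · exact Finset.range_subset_range.mpr (Nat.succ_le_succ (Nat.lt_succ_iff.mp hmρ))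
    · intro j hj hj'
      have : p j = 0 := hgt j (Finset.mem_range.mp hj)
        (by
          rcases Nat.lt_or_ge j (m+1) with h' | h'
          · exact absurd (Finset.mem_range.mpr h') hj'
          · exact h')
      rw [this, map_zero, zero_mul]
  rcases Nat.eq_zero_or_pos m with hm0 | hm0
  · -- p 0 ≠ 0 and p 0 • x = 0, so x = 0
    clear_value m
    subst hm0
    simp only [zero_add, Finset.sum_range_one, Function.iterate_zero, id_eq] at G1
    have hunit : IsUnit (psi F (p 0)) := isUnit_psi F hpm
    have hx0 : x = 0 := by
      obtain ⟨u, hu⟩ := hunit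
      have := congrArg (fun z => (↑u⁻¹ : GF F) * z) G1
      simp only [mul_zero, ← mul_assoc, ← hu] at this
      rwa [Units.inv_mul, one_mul] at this
    exact ⟨⊥, Submodule.fg_bot, by rw [hx0]; exact Submodule.zero_mem _,
      fun v hv => by rw [Submodule.mem_bot] at hv; rw [hv, map_zero]; exact Submodule.zero_mem _⟩
  · set V : Submodule (RatFunc F) (GF F) :=
      Submodule.span (RatFunc F) (Set.range fun j : Fin m => (shift F)^[(j : ℕ)] x) with hV
    have hgen : ∀ j : Fin m, (shift F)^[(j : ℕ)] x ∈ V :=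
      fun j => Submodule.subset_span ⟨j, rfl⟩
    have hmem_m : (shift F)^[m] x ∈ V := by
      have hsplit : psi F (p m) * (shift F)^[m] x =
          - ∑ j ∈ Finset.range m, psi F (p j) * (shift F)^[j] x := by
        have := Finset.sum_range_succ
          (fun j => psi F (p j) * (shift F)^[j] x) m
        rw [this] at G1
        linear_combination G1
      have hRHS : - ∑ j ∈ Finset.range m, psi F (p j) * (shift F)^[j] x ∈ V := by
        refine Submodule.neg_mem _ (Submodule.sum_mem _ fun j hj => ?_)
        rw [psi_mul_eq_smul]
        exact Submodule.smul_mem _ _ (hgen ⟨j, Finset.mem_range.mp hj⟩)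
      have hc : (algebraMap (Polynomial F) (RatFunc F) (p m)) ≠ 0 :=
        RatFunc.algebraMap_ne_zero hpm
      have : (shift F)^[m] x =
          (algebraMap (Polynomial F) (RatFunc F) (p m))⁻¹ •
            (psi F (p m) * (shift F)^[m] x) := by
        rw [psi_mul_eq_smul, smul_smul, inv_mul_cancel₀ hc, one_smul]
      rw [this, hsplit]
      exact Submodule.smul_mem _ _ hRHS
    have hstable : ∀ v ∈ V, shift F v ∈ V := by
      have hle : V ≤ shiftPre F V := by
        rw [hV, Submodule.span_le]
        rintro _ ⟨j, rfl⟩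
        show shift F ((shift F)^[(j : ℕ)] x) ∈ V
        rw [← Function.iterate_succ_apply' (shift F)]
        rcases Nat.lt_or_ge ((j : ℕ) + 1) m with hlt | hge
        · exact hgen ⟨(j : ℕ) + 1, hlt⟩
        · have hjm : (j : ℕ) + 1 = m := le_antisymm (Nat.succ_le_of_lt j.isLt) hge
          show (shift F)^[(j : ℕ) + 1] x ∈ V
          rw [hjm]; exact hmem_m
      exact fun v hv => hle hv
    refine ⟨V, Submodule.fg_span (Set.finite_range _), ?_, hstable⟩
    have : x = (shift F)^[((⟨0, hm0⟩ : Fin m) : ℕ)] x := rfl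
    rw [this]
    exact hgen _


lemma pRecursive_of_holo {a : ℕ → ℂ} (h : Holo F (germ F a)) : IsPRecursiveOver F a := by
  classical
  obtain ⟨V, hfg, hmem, hstable⟩ := h
  set x := germ F a with hx
  haveI : Module.Finite (RatFunc F) V := Module.Finite.iff_fg.mpr hfg
  set d : ℕ := Module.finrank (RatFunc F) V with hd
  have hiter : ∀ i : ℕ, (shift F)^[i] x ∈ V := by
    intro i
    induction i with
    | zero => exact hmem
    | succ i ih => rw [Function.iterate_succ_apply']; exact hstable _ ih
  set v : Fin (d + 1) → V := fun i => ⟨(shift F)^[(i : ℕ)] x, hiter i⟩ with hv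
  have hnli : ¬ LinearIndependent (RatFunc F) v := by
    intro hli
    have := hli.fintype_card_le_finrank
    rw [Fintype.card_fin] at this
    omega
  obtain ⟨g, hgsum, i₀, hgi₀⟩ := Fintype.not_linearIndependent_iff.mp hnli
  -- push to GF F
  have hsum : ∑ i : Fin (d + 1), g i • (shift F)^[(i : ℕ)] x = 0 := by
    have := congrArg (V.subtype) hgsum
    rw [map_sum, map_zero] at this
    simpa using this
  -- clear denominators
  set D : Polynomial F := ∏ i : Fin (d + 1), (g i).denom with hD
  set q : Fin (d + 1) → Polynomial F :=
    fun i => (g i).num * ∏ j ∈ Finset.univ.erase i, (g j).denom with hq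
  have hkey : ∀ i, algebraMap (Polynomial F) (RatFunc F) (q i) =
      algebraMap (Polynomial F) (RatFunc F) D * g i := by
    intro i
    have hDi : D = (g i).denom * ∏ j ∈ Finset.univ.erase i, (g j).denom :=
      (Finset.mul_prod_erase _ _ (Finset.mem_univ i)).symm
    have hden : algebraMap (Polynomial F) (RatFunc F) (g i).denom ≠ 0 :=
      RatFunc.algebraMap_ne_zero (RatFunc.denom_ne_zero _)
    have h1 : g i * algebraMap (Polynomial F) (RatFunc F) (g i).denom =
        algebraMap (Polynomial F) (RatFunc F) (g i).num :=
      ((div_eq_iff hden).mp (RatFunc.num_div_denom (g i))).symm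
    rw [hq, hDi]
    simp only [map_mul, Polynomial.map_prod]
    rw [map_prod]
    linear_combination (- ∏ j ∈ Finset.univ.erase i,
      algebraMap (Polynomial F) (RatFunc F) (g j).denom) * h1
  have hq0 : q i₀ ≠ 0 := by
    apply mul_ne_zero (RatFunc.num_ne_zero hgi₀)
    rw [Ne, Finset.prod_eq_zero_iff]
    push_neg
    exact fun j _ => RatFunc.denom_ne_zero _
  have hsum2 : ∑ i : Fin (d + 1), psi F (q i) * (shift F)^[(i : ℕ)] x = 0 := by
    have hterm : ∀ i : Fin (d + 1), psi F (q i) * (shift F)^[(i : ℕ)] x =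
        algebraMap (Polynomial F) (RatFunc F) D • (g i • (shift F)^[(i : ℕ)] x) := by
      intro i
      rw [psi_mul_eq_smul, hkey i, mul_smul]
    rw [Finset.sum_congr rfl fun i _ => hterm i, ← Finset.smul_sum, hsum, smul_zero]
  -- translate to an eventual recurrence
  have hev : ∀ᶠ n : ℕ in atTop, ∑ i : Fin (d + 1),
      ((q i).map F.subtype).eval ((n : ℕ) : ℂ) * a (n + (i : ℕ)) = 0 := by
    rw [← germ_eq_zero_iff, germ_sum, ← hsum2]
    exact Finset.sum_congr rfl fun i _ => (term_eq F a (q i) (i : ℕ)).symm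
  obtain ⟨N, hN⟩ := Filter.eventually_atTop.mp hev
  -- multiply by a polynomial vanishing at 0, ..., N-1
  set Q : Polynomial F := ∏ k ∈ Finset.range N, (Polynomial.X - Polynomial.C ((k : ℕ) : F))
    with hQdef
  have hQmonic : Q.Monic := Polynomial.monic_prod_of_monic _ _
    fun k _ => Polynomial.monic_X_sub_C _
  have hQ0 : Q ≠ 0 := hQmonic.ne_zero
  have hQzero : ∀ n : ℕ, n < N → (Q.map F.subtype).eval ((n : ℕ) : ℂ) = 0 := by
    intro n hn
    rw [hQdef, Polynomial.map_prod, Polynomial.eval_prod]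
    refine Finset.prod_eq_zero (Finset.mem_range.mpr hn) ?_
    rw [Polynomial.map_sub, Polynomial.map_X, Polynomial.map_C, Polynomial.eval_sub,
      Polynomial.eval_X, Polynomial.eval_C]
    have : (F.subtype ((n : F))) = ((n : ℕ) : ℂ) := map_natCast F.subtype n
    rw [this, sub_self]
  refine ⟨d, fun j => if hj : j < d + 1 then Q * q ⟨j, hj⟩ else 0, ?_, ?_⟩
  · refine ⟨(i₀ : ℕ), Nat.lt_succ_iff.mp i₀.isLt, ?_⟩
    show (if hj : (i₀ : ℕ) < d + 1 then Q * q ⟨(i₀ : ℕ), hj⟩ else 0) ≠ 0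
    rw [dif_pos i₀.isLt, Fin.eta]
    exact mul_ne_zero hQ0 hq0
  · intro n
    rw [Finset.sum_range
      (fun j => (((if hj : j < d + 1 then Q * q ⟨j, hj⟩ else 0) : Polynomial F).map
        F.subtype).eval ((n : ℕ) : ℂ) * a (n + j))]
    have hterm : ∀ i : Fin (d + 1),
        (((if hj : (i : ℕ) < d + 1 then Q * q ⟨(i : ℕ), hj⟩ else 0) : Polynomial F).map
          F.subtype).eval ((n : ℕ) : ℂ) * a (n + (i : ℕ)) =
        (Q.map F.subtype).eval ((n : ℕ) : ℂ) *
          (((q i).map F.subtype).eval ((n : ℕ) : ℂ) * a (n + (i : ℕ))) := by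
      intro i
      rw [dif_pos i.isLt, Fin.eta, Polynomial.map_mul, Polynomial.eval_mul, mul_assoc]
    rw [Finset.sum_congr rfl fun i _ => hterm i, ← Finset.mul_sum]
    rcases Nat.lt_or_ge n N with hn | hn
    · rw [hQzero n hn, zero_mul]
    · rw [hN n hn, mul_zero]


lemma pRecursive_const (c : ℂ) : IsPRecursiveOver F (fun _ => c) := by
  refine ⟨1, fun j => if j = 0 then 1 else -1, ⟨0, Nat.zero_le 1, by simp⟩, ?_⟩
  intro n
  rw [Finset.sum_range_succ, Finset.sum_range_one]
  simp [Polynomial.map_one, Polynomial.map_neg]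

lemma pRecursive_neg {a : ℕ → ℂ} (h : IsPRecursiveOver F a) :
    IsPRecursiveOver F (fun n => -a n) := by
  obtain ⟨ρ, p, hp, hrec⟩ := h
  refine ⟨ρ, p, hp, fun n => ?_⟩
  have := hrec n
  rw [← neg_eq_zero, ← Finset.sum_neg_distrib] at this
  rw [← this]
  exact Finset.sum_congr rfl fun j _ => by ring

lemma pRecursive_add {a b : ℕ → ℂ} (ha : IsPRecursiveOver F a) (hb : IsPRecursiveOver F b) :
    IsPRecursiveOver F (fun n => a n + b n) := by
  apply pRecursive_of_holo
  have : germ F (fun n => a n + b n) = germ F a + germ F b := rfl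
  rw [this]
  exact holo_add F (holo_of_pRecursive F ha) (holo_of_pRecursive F hb)

lemma pRecursive_mul {a b : ℕ → ℂ} (ha : IsPRecursiveOver F a) (hb : IsPRecursiveOver F b) :
    IsPRecursiveOver F (fun n => a n * b n) := by
  apply pRecursive_of_holo
  have : germ F (fun n => a n * b n) = germ F a * germ F b := rfl
  rw [this]
  exact holo_mul F (holo_of_pRecursive F ha) (holo_of_pRecursive F hb)

end

/-- **Proposition.** `D_{R,F}` is a subring of `ℂ`; moreover, if `R` is an
`F`-algebra (i.e. `F ⊆ R`), then so is `D_{R,F}` (it is a subring of `ℂ`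
containing `F`). -/
theorem dFiniteNumbers_subring
    (R : Subring ℂ) (F : Subfield ℂ) :
    (∃ S : Subring ℂ, (S : Set ℂ) = DFiniteNumbers R F) ∧
    ((∀ x : ℂ, x ∈ F → x ∈ R) →
      ∀ x : ℂ, x ∈ F → x ∈ DFiniteNumbers R F) := by
  constructor
  · refine ⟨{
      carrier := DFiniteNumbers R F
      zero_mem' := ⟨fun _ => 0, fun _ => R.zero_mem, pRecursive_const F 0, tendsto_const_nhds⟩
      one_mem' := ⟨fun _ => 1, fun _ => R.one_mem, pRecursive_const F 1, tendsto_const_nhds⟩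
      add_mem' := ?_
      mul_mem' := ?_
      neg_mem' := ?_ }, rfl⟩
    · rintro x y ⟨u, huR, huP, huT⟩ ⟨w, hwR, hwP, hwT⟩
      exact ⟨fun n => u n * w n, fun n => R.mul_mem (huR n) (hwR n),
        pRecursive_mul F huP hwP, huT.mul hwT⟩
    · rintro x y ⟨u, huR, huP, huT⟩ ⟨w, hwR, hwP, hwT⟩
      exact ⟨fun n => u n + w n, fun n => R.add_mem (huR n) (hwR n),
        pRecursive_add F huP hwP, huT.add hwT⟩
    · rintro x ⟨u, huR, huP, huT⟩
      exact ⟨fun n => -u n, fun n => R.neg_mem (huR n),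
        pRecursive_neg F huP, huT.neg⟩
  · intro hFR x hxF
    exact ⟨fun _ => x, fun _ => hFR x hxF, pRecursive_const F x, tendsto_const_nhds⟩
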